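/- Let g ∈ L²(ℝ) be a window function, let s > 0, and let c : ℤ → ℂ be a finitely supported sequence. Define f = Σ_{k∈ℤ} c_k M_{sk}(Rg) and f_× = Σ_{k∈ℤ} conj(c_k) M_{sk}(Rg) (finite sums in L²(ℝ)). Then |V_g f(n/s, ω)| = |V_g f_×(n/s, ω)| for every n ∈ ℤ and every ω ∈ ℝ; that is, the spectrograms of f and f_× agree pointwise on the vertical parallel lines (1/s)ℤ × ℝ. (This is the case θ = π/2 of the rotated parallel-lines theorem, since the fractional Fourier shift of order π/2 is the modulation operator and R_{π/2}(ℝ × (1/s)ℤ) = (1/s)ℤ × ℝ.) -/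

import Mathlib

open MeasureTheory Complex Real

/-- The short-time Fourier transform of `f ∈ L²(ℝ)` with respect to the window `g ∈ L²(ℝ)`:
`V_g f (x, ω) = ∫ f(t) conj(g(t-x)) e^{-2πiωt} dt`. -/
noncomputable def STFT (g f : Lp ℂ 2 (volume : Measure ℝ)) (x ω : ℝ) : ℂ :=
  ∫ t : ℝ, f t * (starRingEnd ℂ) (g (t - x)) * Complex.exp (-2 * Real.pi * Complex.I * ω * t)

/-- `f` and `h` agree up to a global phase: `f = ν • h` for some unimodular `ν ∈ ℂ`. -/
def SamePhase (f h : Lp ℂ 2 (volume : Measure ℝ)) : Prop :=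
  ∃ ν : ℂ, ‖ν‖ = 1 ∧ f = ν • h

/-- Reflection operator on `L²(ℝ)`: `(R f)(t) = f (-t)`. -/
noncomputable def Reflect (f : Lp ℂ 2 (volume : Measure ℝ)) : Lp ℂ 2 (volume : Measure ℝ) :=
  Lp.compMeasurePreserving (fun t => -t) (Measure.measurePreserving_neg volume) f

/-- Modulation operator `M_ν` on `L²(ℝ)`: `(M_ν f)(t) = e^{2πiνt} f(t)`. -/
noncomputable def Modulate (ν : ℝ) (f : Lp ℂ 2 (volume : Measure ℝ)) :
    Lp ℂ 2 (volume : Measure ℝ) :=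
  MemLp.toLp (fun t : ℝ => Complex.exp (2 * Real.pi * Complex.I * ν * t) * f t) <| by
    refine MemLp.of_le (Lp.memLp f) ?_ ?_
    · exact (Complex.continuous_exp.comp (by continuity)).aestronglyMeasurable.mul
        (Lp.aestronglyMeasurable f)
    · refine Filter.Eventually.of_forall fun t => ?_
      rw [norm_mul]
      have h1 : ‖Complex.exp (2 * Real.pi * Complex.I * (ν : ℂ) * (t : ℂ))‖ = 1 := by
        rw [Complex.norm_exp]
        norm_num [Complex.exp_re]
      rw [h1, one_mul]

/-- Auxiliary integral: the `k`-th "coefficient integral" appearing when expanding the STFT of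
a finite modulation sum, with `a = s k`. -/
noncomputable def Jaux (g : Lp ℂ 2 (volume : Measure ℝ)) (x ω a : ℝ) : ℂ :=
  ∫ t : ℝ, Complex.exp ((((a - ω) * t : ℝ) : ℂ) * (2 * Real.pi * Complex.I)) * g (-t) *
    (starRingEnd ℂ) (g (t - x))

lemma Lp_coeFn_sum {ι : Type*} (S : Finset ι) (F : ι → Lp ℂ 2 (volume : Measure ℝ)) :
    (⇑(∑ i ∈ S, F i) : ℝ → ℂ) =ᵐ[volume] fun t => ∑ i ∈ S, F i t := by
  classical
  induction S using Finset.induction_on with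
  | empty =>
    simp only [Finset.sum_empty]
    exact Lp.coeFn_zero ℂ 2 (volume : Measure ℝ)
  | @insert a S hnot ih =>
    rw [Finset.sum_insert hnot]
    filter_upwards [Lp.coeFn_add (F a) (∑ i ∈ S, F i), ih] with t h1 h2
    simp only [h1, Pi.add_apply, h2, Finset.sum_insert hnot]

lemma Reflect_coeFn (g : Lp ℂ 2 (volume : Measure ℝ)) :
    (⇑(Reflect g) : ℝ → ℂ) =ᵐ[volume] fun t => g (-t) :=
  Lp.coeFn_compMeasurePreserving g _

lemma Modulate_coeFn (ν : ℝ) (f : Lp ℂ 2 (volume : Measure ℝ)) :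
    (⇑(Modulate ν f) : ℝ → ℂ) =ᵐ[volume]
      fun t : ℝ => Complex.exp (2 * Real.pi * Complex.I * ν * t) * f t := by
  unfold Modulate
  exact MemLp.coeFn_toLp _

lemma Jaux_integrable (g : Lp ℂ 2 (volume : Measure ℝ)) (x ω a : ℝ) :
    Integrable (fun t : ℝ =>
      Complex.exp ((((a - ω) * t : ℝ) : ℂ) * (2 * Real.pi * Complex.I)) * g (-t) *
        (starRingEnd ℂ) (g (t - x))) volume := by
  have hmp : MeasurePreserving (fun t : ℝ => t - x) volume volume := by
    simpa [sub_eq_add_neg] using measurePreserving_add_right (volume : Measure ℝ) (-x)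
  set T : Lp ℂ 2 (volume : Measure ℝ) := Lp.compMeasurePreserving (fun t : ℝ => t - x) hmp g
  have h1 : (⇑T : ℝ → ℂ) =ᵐ[volume] fun t => g (t - x) := Lp.coeFn_compMeasurePreserving g hmp
  have h2 : (⇑(Reflect g) : ℝ → ℂ) =ᵐ[volume] fun t => g (-t) := Reflect_coeFn g
  have hbase : Integrable (fun t : ℝ => (starRingEnd ℂ) (g (t - x)) * g (-t)) volume := by
    have h := L2.integrable_inner (𝕜 := ℂ) T (Reflect g)
    refine h.congr ?_
    filter_upwards [h1, h2] with t e1 e2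
    simp [RCLike.inner_apply, e1, e2]
    ring
  have hmeas : AEStronglyMeasurable
      (fun t : ℝ => Complex.exp ((((a - ω) * t : ℝ) : ℂ) * (2 * Real.pi * Complex.I))) volume := by
    refine Continuous.aestronglyMeasurable ?_
    fun_prop
  have hb : Integrable (fun t : ℝ =>
      Complex.exp ((((a - ω) * t : ℝ) : ℂ) * (2 * Real.pi * Complex.I)) *
        ((starRingEnd ℂ) (g (t - x)) * g (-t))) volume := by
    refine hbase.bdd_mul (c := 1) hmeas (Filter.Eventually.of_forall fun t => ?_)
    rw [show ((((a - ω) * t : ℝ) : ℂ) * (2 * Real.pi * Complex.I))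
        = (((a - ω) * t * (2 * Real.pi) : ℝ) : ℂ) * Complex.I by push_cast; ring]
    rw [Complex.norm_exp_ofReal_mul_I]
  refine hb.congr (Filter.Eventually.of_forall fun t => ?_)
  ring

lemma Jaux_conj (g : Lp ℂ 2 (volume : Measure ℝ)) (x ω a : ℝ) (m : ℤ) (hax : a * x = (m : ℝ)) :
    (starRingEnd ℂ) (Jaux g x ω a) =
      Complex.exp (((2 * Real.pi * ω * x : ℝ) : ℂ) * Complex.I) * Jaux g x ω a := by
  have haxC : (a : ℂ) * (x : ℂ) = (m : ℂ) := by exact_mod_cast congrArg Complex.ofReal hax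
  rw [Jaux, ← integral_conj]
  rw [← MeasureTheory.integral_sub_left_eq_self (fun t : ℝ =>
    (starRingEnd ℂ) (Complex.exp ((((a - ω) * t : ℝ) : ℂ) * (2 * Real.pi * Complex.I)) * g (-t) *
      (starRingEnd ℂ) (g (t - x)))) volume x]
  rw [← integral_const_mul]
  refine integral_congr_ae (Filter.Eventually.of_forall fun t => ?_)
  simp only
  have e1 : -(x - t) = t - x := neg_sub x t
  have e2 : x - t - x = -t := by ring
  rw [e1, e2, map_mul, map_mul, Complex.conj_conj]
  have e3 : (starRingEnd ℂ) (Complex.exp ((((a - ω) * (x - t) : ℝ) : ℂ) * (2 * Real.pi * Complex.I)))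
      = Complex.exp (((2 * Real.pi * ω * x : ℝ) : ℂ) * Complex.I) *
        Complex.exp ((((a - ω) * t : ℝ) : ℂ) * (2 * Real.pi * Complex.I)) *
        Complex.exp (((-m : ℤ) : ℂ) * (2 * Real.pi * Complex.I)) := by
    rw [← Complex.exp_conj, ← Complex.exp_add, ← Complex.exp_add]
    have hc : (starRingEnd ℂ) ((((a - ω) * (x - t) : ℝ) : ℂ) * (2 * Real.pi * Complex.I))
        = (((a - ω) * (x - t) : ℝ) : ℂ) * (2 * Real.pi * (-Complex.I)) := by
      simp only [map_mul, Complex.conj_ofReal, Complex.conj_I, map_ofNat]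
    congr 1
    rw [hc]
    push_cast
    linear_combination (-(2 * (Real.pi : ℂ) * Complex.I)) * haxC
  rw [e3, Complex.exp_int_mul_two_pi_mul_I]
  ring

theorem stmt7 (g : Lp ℂ 2 (volume : Measure ℝ)) (s : ℝ) (hs : 0 < s) (c : ℤ →₀ ℂ) :
    ∀ n : ℤ, ∀ ω : ℝ,
      ‖STFT g (∑ k ∈ c.support, c k • Modulate (s * k) (Reflect g)) (n / s) ω‖ =
      ‖STFT g
        (∑ k ∈ c.support, (starRingEnd ℂ) (c k) • Modulate (s * k) (Reflect g)) (n / s) ω‖ := by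
  intro n ω
  set x : ℝ := (n : ℝ) / s with hx
  -- expand the STFT of a general modulation sum
  have hgen : ∀ d : ℤ → ℂ,
      STFT g (∑ k ∈ c.support, d k • Modulate (s * k) (Reflect g)) x ω =
        ∑ k ∈ c.support, d k * Jaux g x ω (s * k) := by
    intro d
    have hterm : ∀ k : ℤ, (⇑(d k • Modulate (s * (k : ℝ)) (Reflect g)) : ℝ → ℂ) =ᵐ[volume]
        fun t : ℝ => d k *
          (Complex.exp (2 * Real.pi * Complex.I * ((s * (k : ℝ) : ℝ) : ℂ) * t) * g (-t)) := by
      intro k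
      filter_upwards [Lp.coeFn_smul (d k) (Modulate (s * (k : ℝ)) (Reflect g)),
        Modulate_coeFn (s * (k : ℝ)) (Reflect g), Reflect_coeFn g] with t e1 e2 e3
      rw [e1, Pi.smul_apply, e2, smul_eq_mul, e3]
    have hall : ∀ᵐ t ∂(volume : Measure ℝ), ∀ k : ℤ,
        (⇑(d k • Modulate (s * (k : ℝ)) (Reflect g)) : ℝ → ℂ) t = d k *
          (Complex.exp (2 * Real.pi * Complex.I * ((s * (k : ℝ) : ℝ) : ℂ) * t) * g (-t)) :=
      ae_all_iff.mpr hterm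
    have hcoe : (⇑(∑ k ∈ c.support, d k • Modulate (s * (k : ℝ)) (Reflect g)) : ℝ → ℂ)
        =ᵐ[volume] fun t : ℝ => ∑ k ∈ c.support, d k *
          (Complex.exp (2 * Real.pi * Complex.I * ((s * (k : ℝ) : ℝ) : ℂ) * t) * g (-t)) := by
      filter_upwards [Lp_coeFn_sum c.support
        (fun k => d k • Modulate (s * (k : ℝ)) (Reflect g)), hall] with t e1 e2
      rw [e1]
      exact Finset.sum_congr rfl fun k _ => e2 k
    calc STFT g (∑ k ∈ c.support, d k • Modulate (s * k) (Reflect g)) x ω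
        = ∫ t : ℝ, (∑ k ∈ c.support, d k *
            (Complex.exp (2 * Real.pi * Complex.I * ((s * (k : ℝ) : ℝ) : ℂ) * t) * g (-t))) *
            (starRingEnd ℂ) (g (t - x)) * Complex.exp (-2 * Real.pi * Complex.I * ω * t) :=
          integral_congr_ae (hcoe.mono fun t ht => by simp only [ht])
      _ = ∫ t : ℝ, ∑ k ∈ c.support, d k *
            (Complex.exp ((((s * (k : ℝ) - ω) * t : ℝ) : ℂ) * (2 * Real.pi * Complex.I)) *
              g (-t) * (starRingEnd ℂ) (g (t - x))) := by
          refine integral_congr_ae (Filter.Eventually.of_forall fun t => ?_)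
          simp only
          rw [Finset.sum_mul, Finset.sum_mul]
          refine Finset.sum_congr rfl fun k _ => ?_
          have hE : Complex.exp (2 * Real.pi * Complex.I * ((s * (k : ℝ) : ℝ) : ℂ) * t) *
              Complex.exp (-2 * Real.pi * Complex.I * ω * t) =
              Complex.exp ((((s * (k : ℝ) - ω) * t : ℝ) : ℂ) * (2 * Real.pi * Complex.I)) := by
            rw [← Complex.exp_add]
            congr 1
            push_cast
            ring
          rw [← hE]
          ring
      _ = ∑ k ∈ c.support, d k * Jaux g x ω (s * k) := by
          rw [integral_finset_sum _ fun (k : ℤ) _ => (Jaux_integrable g x ω (s * (k : ℝ))).const_mul (d k)]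
          exact Finset.sum_congr rfl fun k _ => integral_const_mul _ _
  have hJ : ∀ k : ℤ, (starRingEnd ℂ) (Jaux g x ω (s * k)) =
      Complex.exp (((2 * Real.pi * ω * x : ℝ) : ℂ) * Complex.I) * Jaux g x ω (s * k) := by
    intro k
    refine Jaux_conj g x ω (s * k) (k * n) ?_
    rw [hx]
    push_cast
    field_simp
  have hA := hgen c
  have hB := hgen fun k => (starRingEnd ℂ) (c k)
  rw [hA, hB]
  have hrel : (starRingEnd ℂ) (∑ k ∈ c.support, c k * Jaux g x ω (s * k)) =
      Complex.exp (((2 * Real.pi * ω * x : ℝ) : ℂ) * Complex.I) *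
        ∑ k ∈ c.support, (starRingEnd ℂ) (c k) * Jaux g x ω (s * k) := by
    rw [map_sum, Finset.mul_sum]
    exact Finset.sum_congr rfl fun k _ => by rw [map_mul, hJ k]; ring
  calc ‖(∑ k ∈ c.support, c k * Jaux g x ω (s * k))‖
      = ‖((starRingEnd ℂ) (∑ k ∈ c.support, c k * Jaux g x ω (s * k)))‖ :=
        (Complex.norm_conj _).symm
    _ = ‖(Complex.exp (((2 * Real.pi * ω * x : ℝ) : ℂ) * Complex.I))‖ *
        ‖(∑ k ∈ c.support, (starRingEnd ℂ) (c k) * Jaux g x ω (s * k))‖ := by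
        rw [hrel, norm_mul]
    _ = ‖(∑ k ∈ c.support, (starRingEnd ℂ) (c k) * Jaux g x ω (s * k))‖ := by
        rw [Complex.norm_exp_ofReal_mul_I, one_mul]
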